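/- Let g be a Lie algebra over a field of characteristic zero and let R₁, R₂ : g → g be commuting O-operators of g associated to the adjoint representation, i.e., R₁∘R₂ = R₂∘R₁ as linear maps and [Rᵢ(x), Rᵢ(y)] = Rᵢ([Rᵢ(x), y] + [x, Rᵢ(y)]) for i = 1,2 and all x,y ∈ g. Then the operations x▷y = [R₁(R₂(x)), y] and x◁y = [R₂(x), R₁(y)] define an L-dendriform algebra structure on g. -/
import Mathlib


/-- An L-dendriform algebra structure. -/
def IsLDendriform {K A : Type*} [Field K] [AddCommGroup A] [Module K A]
    (tr tl : A →ₗ[K] A →ₗ[K] A) : Prop :=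
  (∀ x y z : A, tr x (tr y z) =
      tr (tr x y) z + tr (tl x y) z + tr y (tr x z) - tr (tl y x) z - tr (tr y x) z) ∧
  (∀ x y z : A, tr x (tl y z) =
      tl (tr x y) z + tl y (tr x z) + tl y (tl x z) - tl (tl y x) z)

/-- Let `g` be a Lie algebra over a field of characteristic zero and
`R₁, R₂ : g → g` be commuting O-operators of `g` associated to the adjoint
representation. Then `x▷y = [R₁(R₂(x)), y]` and `x◁y = [R₂(x), R₁(y)]` define an
L-dendriform algebra structure on `g`. Here the two bilinear operations `tr`, `tl`
are given by explicit hypotheses expressing these formulas. -/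
theorem LDendriform_of_commuting_OOperators {K g : Type*} [Field K] [CharZero K]
    [LieRing g] [LieAlgebra K g]
    (R₁ R₂ : g →ₗ[K] g)
    (hcomm : R₁ ∘ₗ R₂ = R₂ ∘ₗ R₁)
    (h₁ : ∀ x y : g, ⁅R₁ x, R₁ y⁆ = R₁ (⁅R₁ x, y⁆ + ⁅x, R₁ y⁆))
    (h₂ : ∀ x y : g, ⁅R₂ x, R₂ y⁆ = R₂ (⁅R₂ x, y⁆ + ⁅x, R₂ y⁆))
    (tr tl : g →ₗ[K] g →ₗ[K] g)
    (htr : ∀ x y : g, tr x y = ⁅R₁ (R₂ x), y⁆)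
    (htl : ∀ x y : g, tl x y = ⁅R₂ x, R₁ y⁆) :
    IsLDendriform tr tl := by
  have hc : ∀ x, R₁ (R₂ x) = R₂ (R₁ x) := fun x => LinearMap.congr_fun hcomm x
  -- key1 : ⁅Sx, R₂ y⁆ = R₂ ⁅Sx, y⁆ - R₂ ⁅R₂ y, R₁ x⁆
  have key1 : ∀ x y : g, ⁅R₁ (R₂ x), R₂ y⁆ = R₂ ⁅R₁ (R₂ x), y⁆ - R₂ ⁅R₂ y, R₁ x⁆ := by
    intro x y
    rw [hc, h₂ (R₁ x) y, map_add, ← hc, ← lie_skew (R₂ y) (R₁ x), map_neg]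
    abel
  -- key2 : ⁅Sx, R₁ y⁆ = R₁ ⁅Sx, y⁆ + R₁ ⁅R₂ x, R₁ y⁆
  have key2 : ∀ x y : g, ⁅R₁ (R₂ x), R₁ y⁆ = R₁ ⁅R₁ (R₂ x), y⁆ + R₁ ⁅R₂ x, R₁ y⁆ := by
    intro x y
    rw [h₁ (R₂ x) y, map_add]
  -- the bracket of S x and S y
  have hb : ∀ x y : g, ⁅R₁ (R₂ x), R₁ (R₂ y)⁆ =
      R₁ (R₂ ⁅R₁ (R₂ x), y⁆) + R₁ (R₂ ⁅R₂ x, R₁ y⁆)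
        - R₁ (R₂ ⁅R₂ y, R₁ x⁆) - R₁ (R₂ ⁅R₁ (R₂ y), x⁆) := by
    intro x y
    have e1 : ⁅R₂ x, R₁ (R₂ y)⁆ = R₂ ⁅R₂ x, R₁ y⁆ - R₂ ⁅R₁ (R₂ y), x⁆ := by
      rw [show ⁅R₂ x, R₁ (R₂ y)⁆ = -⁅R₁ (R₂ y), R₂ x⁆ from (lie_skew _ _).symm,
        key1 y x, neg_sub]
    rw [h₁ (R₂ x) (R₂ y), key1 x y, e1, map_add, map_sub, map_sub]
    abel
  constructor <;> intro x y z <;>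
    simp only [htr, htl]
  · rw [leibniz_lie, hb, sub_lie, sub_lie, add_lie]
    abel
  · rw [leibniz_lie, key1 x y, key2 x z, sub_lie, lie_add]
    abel
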